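/- arXiv:1304.1641 — 2 statements merged into one kernel-verified Lean document; each statement's English description precedes it below -/
import Mathlib

section
/- Let X, Y, Z be pairwise q-commuting elements with relations YX = qXY, XZ = qZX, ZY = qYZ. Then the cyclic 4∼4 quantum dilogarithm identity holds: E(X)·E(XY)·E(Z)·E(Y) = E(Z)·E(ZX)·E(Y)·E(X) = E(Y)·E(YZ)·E(X)·E(Z), where E is the quantum exponential series. -/
set_option linter.unusedSectionVars false
set_option maxHeartbeats 1000000

/-- Coefficients of the quantum exponential series
`E(x) = ∑ (-x)^n / ((1-q)⋯(1-q^n))` with `q = RatFunc.X`. -/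
noncomputable def qcoef (n : ℕ) : RatFunc ℚ :=
  (-1 : RatFunc ℚ) ^ n / ∏ k ∈ Finset.range n, (1 - (RatFunc.X : RatFunc ℚ) ^ (k + 1))

/-- The quantum exponential of an element of a topological algebra over `ℚ(q)`. -/
noncomputable def qexp {A : Type*} [Ring A] [Algebra (RatFunc ℚ) A] [TopologicalSpace A]
    (x : A) : A :=
  ∑' n : ℕ, qcoef n • x ^ n

/-! ### Scalar lemmas about the coefficients -/

noncomputable def Pden (n : ℕ) : RatFunc ℚ :=
  ∏ k ∈ Finset.range n, (1 - (RatFunc.X : RatFunc ℚ) ^ (k + 1))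

lemma one_sub_X_pow_ne_zero (k : ℕ) : (1 : RatFunc ℚ) - RatFunc.X ^ (k + 1) ≠ 0 := by
  intro h
  have h2 : ((1 : Polynomial ℚ) - Polynomial.X ^ (k+1)) = 0 := by
    apply RatFunc.algebraMap_injective ℚ
    push_cast [map_sub, map_one, map_pow, RatFunc.algebraMap_X]
    simpa [RatFunc.algebraMap_X] using h
  have := congrArg (fun p => Polynomial.coeff p (k+1)) h2
  simp [Polynomial.coeff_one, Polynomial.coeff_X_pow] at this

lemma Pden_ne_zero (n : ℕ) : Pden n ≠ 0 :=
  Finset.prod_ne_zero_iff.2 fun k _ => one_sub_X_pow_ne_zero k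

lemma Pden_succ (n : ℕ) : Pden (n + 1) = Pden n * (1 - RatFunc.X ^ (n + 1)) :=
  Finset.prod_range_succ _ n

lemma qcoef_eq (n : ℕ) : qcoef n = (-1) ^ n / Pden n := rfl

lemma Pden_zero : Pden 0 = 1 := rfl

lemma qcoef_zero' : qcoef 0 = 1 := by
  simp [qcoef]

noncomputable def gb (n k : ℕ) : RatFunc ℚ :=
  if k ≤ n then Pden n / (Pden k * Pden (n - k)) else 0

lemma gb_zero (n : ℕ) : gb n 0 = 1 := by
  simp [gb, Pden_zero, div_self (Pden_ne_zero n)]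

lemma gb_self (n : ℕ) : gb n n = 1 := by
  simp [gb, Pden_zero, div_self (Pden_ne_zero n)]

lemma gb_of_gt {n k : ℕ} (h : n < k) : gb n k = 0 := by
  simp [gb, Nat.not_le.2 h]

lemma gb_pascal (a b : ℕ) :
    gb (a + b + 1) (a + 1) = gb (a + b) (a + 1) + RatFunc.X ^ b * gb (a + b) a := by
  cases b with
  | zero => simp [gb_self, gb_of_gt (Nat.lt_succ_self a)]
  | succ c =>
    have h1 : a + 1 ≤ a + (c+1) := by omega
    have e1 : a + (c+1) + 1 - (a+1) = c + 1 := by omega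
    have e2 : a + (c+1) - (a+1) = c := by omega
    have e3 : a + (c+1) - a = c + 1 := by omega
    have e4 : a + (c+1) + 1 = (a + (c+1)) + 1 := rfl
    simp only [gb, if_pos (by omega : a + 1 ≤ a + (c+1) + 1), if_pos h1,
      if_pos (by omega : a ≤ a + (c+1)), e1, e2, e3]
    rw [e4, Pden_succ]
    rw [show c + 1 = c + 1 from rfl, Pden_succ c, show a + 1 = a + 1 from rfl, Pden_succ a]
    have ha := Pden_ne_zero a
    have hc := Pden_ne_zero c
    have hn := Pden_ne_zero (a + (c+1))
    have f1 := one_sub_X_pow_ne_zero c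
    have f2 := one_sub_X_pow_ne_zero a
    field_simp
    ring_nf

lemma qcoef_mul_gb (a b : ℕ) : qcoef (a + b) * gb (a + b) a = qcoef a * qcoef b := by
  rw [qcoef_eq, qcoef_eq, qcoef_eq, gb, if_pos (Nat.le_add_right a b), Nat.add_sub_cancel_left]
  have ha := Pden_ne_zero a
  have hb := Pden_ne_zero b
  have hab := Pden_ne_zero (a + b)
  field_simp
  ring

lemma qcoef_q_pow_succ (n : ℕ) :
    RatFunc.X ^ (n + 1) * qcoef (n + 1) = qcoef (n + 1) + qcoef n := by
  rw [qcoef_eq, qcoef_eq, show n + 1 = n + 1 from rfl, Pden_succ]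
  have hn := Pden_ne_zero n
  have f := one_sub_X_pow_ne_zero n
  field_simp
  ring

/-! ### Algebra lemmas -/

section Alg
variable {A : Type*} [Ring A] [Algebra (RatFunc ℚ) A] [TopologicalSpace A] [T2Space A]

local notation "qq" => (RatFunc.X : RatFunc ℚ)

noncomputable def qexpN (N : ℕ) (x : A) : A := ∑ n ∈ Finset.range N, qcoef n • x ^ n

lemma qexp_eq_qexpN {N : ℕ} {x : A} (hx : x ^ N = 0) : qexp x = qexpN N x := by
  refine tsum_eq_sum fun n hn => ?_
  have hn' : N ≤ n := Nat.le_of_not_lt (fun hlt => hn (Finset.mem_range.mpr hlt))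
  rw [pow_eq_zero_of_le hn' hx, smul_zero]

lemma comm_pow_left {u v : A} (h : v * u = qq • (u * v)) (n : ℕ) :
    v * u ^ n = qq ^ n • (u ^ n * v) := by
  induction n with
  | zero => simp
  | succ n ih =>
    rw [pow_succ, ← mul_assoc, ih, smul_mul_assoc, mul_assoc, h, mul_smul_comm,
      smul_smul, ← mul_assoc, ← pow_succ, pow_succ qq, mul_comm (qq ^ n) qq]

lemma comm_pow_right {u v : A} (h : v * u = qq • (u * v)) (m : ℕ) :
    v ^ m * u = qq ^ m • (u * v ^ m) := by
  induction m with
  | zero => simp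
  | succ m ih =>
    rw [pow_succ, mul_assoc, h, mul_smul_comm, ← mul_assoc, ih, smul_mul_assoc,
      smul_smul, mul_assoc, ← pow_succ, pow_succ qq, mul_comm (qq ^ m) qq]

lemma add_pow_q {u v : A} (h : v * u = qq • (u * v)) (n : ℕ) :
    (u + v) ^ n = ∑ k ∈ Finset.range (n + 1), gb n k • (u ^ k * v ^ (n - k)) := by
  induction n with
  | zero => simp [gb_zero]
  | succ n ih =>
    calc (u + v) ^ (n + 1) = ((u + v) ^ n) * (u + v) := by rw [pow_succ]
    _ = ∑ k ∈ Finset.range (n + 1), ((qq ^ (n - k) * gb n k) • (u ^ (k + 1) * v ^ (n - k))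
          + gb n k • (u ^ k * v ^ (n + 1 - k))) := by
        rw [ih, Finset.sum_mul]
        refine Finset.sum_congr rfl fun k hk => ?_
        have hk' : k ≤ n := Nat.lt_succ_iff.mp (Finset.mem_range.mp hk)
        have e1 : n - k + 1 = n + 1 - k := by omega
        rw [mul_add, smul_mul_assoc, smul_mul_assoc, mul_assoc, comm_pow_right h,
          mul_smul_comm, smul_smul, ← mul_assoc, ← pow_succ,
          mul_comm (gb n k) (qq ^ (n - k)), mul_assoc (u ^ k), ← pow_succ, e1]
    _ = (∑ k ∈ Finset.range (n + 1), (qq ^ (n - k) * gb n k) • (u ^ (k + 1) * v ^ (n - k)))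
          + ∑ k ∈ Finset.range (n + 1), gb n k • (u ^ k * v ^ (n + 1 - k)) :=
        Finset.sum_add_distrib
    _ = ∑ k ∈ Finset.range (n + 2), gb (n + 1) k • (u ^ k * v ^ (n + 1 - k)) := by
        rw [Finset.sum_range_succ' (fun k => gb (n + 1) k • (u ^ k * v ^ (n + 1 - k))) (n + 1)]
        have pascal : ∀ k ∈ Finset.range (n + 1),
            gb (n + 1) (k + 1) • (u ^ (k + 1) * v ^ (n + 1 - (k + 1)))
            = gb n (k + 1) • (u ^ (k + 1) * v ^ (n - k))
              + (qq ^ (n - k) * gb n k) • (u ^ (k + 1) * v ^ (n - k)) := by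
          intro k hk
          have hk' : k ≤ n := Nat.lt_succ_iff.mp (Finset.mem_range.mp hk)
          have e1 : n + 1 - (k + 1) = n - k := by omega
          have e2 : k + (n - k) = n := by omega
          have := gb_pascal k (n - k)
          rw [e2] at this
          rw [e1, this, add_smul]
        rw [Finset.sum_congr rfl pascal, Finset.sum_add_distrib]
        have hzero : gb (n + 1) 0 • (u ^ 0 * v ^ (n + 1 - 0)) = v ^ (n + 1) := by
          simp [gb_zero]
        rw [hzero]
        have hB : ∑ k ∈ Finset.range (n + 1), gb n k • (u ^ k * v ^ (n + 1 - k))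
            = (∑ k ∈ Finset.range (n + 1), gb n (k + 1) • (u ^ (k + 1) * v ^ (n - k)))
              + v ^ (n + 1) := by
          rw [Finset.sum_range_succ' (fun k => gb n k • (u ^ k * v ^ (n + 1 - k))) n,
            Finset.sum_range_succ (fun k => gb n (k + 1) • (u ^ (k + 1) * v ^ (n - k))) n]
          rw [gb_of_gt (Nat.lt_succ_self n)]
          simp only [zero_smul, add_zero, gb_zero, pow_zero, one_mul, one_smul,
            Nat.sub_zero]
          refine congrArg (· + v ^ (n + 1)) (Finset.sum_congr rfl fun k hk => ?_)
          have hk' : k < n := Finset.mem_range.mp hk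
          have : n + 1 - (k + 1) = n - k := by omega
          rw [this]
        rw [hB]
        abel
    _ = ∑ k ∈ Finset.range (n + 1 + 1), gb (n + 1) k • (u ^ k * v ^ (n + 1 - k)) := rfl

lemma add_pow_eq_zero {u v : A} (h : v * u = qq • (u * v)) {N : ℕ}
    (hu : u ^ N = 0) (hv : v ^ N = 0) : (u + v) ^ (2 * N) = 0 := by
  rw [add_pow_q h]
  refine Finset.sum_eq_zero fun k hk => ?_
  rcases le_or_gt N k with h1 | h1
  · rw [pow_eq_zero_of_le h1 hu, zero_mul, smul_zero]
  · rw [pow_eq_zero_of_le (by omega) hv, mul_zero, smul_zero]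

lemma qexp_add {u v : A} (h : v * u = qq • (u * v)) {N : ℕ}
    (hu : u ^ N = 0) (hv : v ^ N = 0) : qexp (u + v) = qexp u * qexp v := by
  have hu2 : u ^ (2 * N) = 0 := pow_eq_zero_of_le (by omega) hu
  have hv2 : v ^ (2 * N) = 0 := pow_eq_zero_of_le (by omega) hv
  rw [qexp_eq_qexpN (add_pow_eq_zero h hu hv), qexp_eq_qexpN hu2, qexp_eq_qexpN hv2]
  unfold qexpN
  rw [Finset.sum_mul_sum]
  calc ∑ n ∈ Finset.range (2 * N), qcoef n • (u + v) ^ n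
      = ∑ n ∈ Finset.range (2 * N), ∑ k ∈ Finset.range (n + 1),
          (qcoef k * qcoef (n - k)) • (u ^ k * v ^ (n - k)) := by
        refine Finset.sum_congr rfl fun n _ => ?_
        rw [add_pow_q h, Finset.smul_sum]
        refine Finset.sum_congr rfl fun k hk => ?_
        have hk' : k ≤ n := Nat.lt_succ_iff.mp (Finset.mem_range.mp hk)
        rw [smul_smul]
        congr 1
        have := qcoef_mul_gb k (n - k)
        rwa [Nat.add_sub_cancel' hk'] at this
    _ = ∑ p ∈ (Finset.range (2 * N)).sigma (fun n => Finset.range (n + 1)),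
          (qcoef p.2 * qcoef (p.1 - p.2)) • (u ^ p.2 * v ^ (p.1 - p.2)) :=
        Finset.sum_sigma' _ _ _
    _ = ∑ p ∈ (Finset.range (2 * N) ×ˢ Finset.range (2 * N)).filter
          (fun p => p.1 + p.2 < 2 * N),
          (qcoef p.1 * qcoef p.2) • (u ^ p.1 * v ^ p.2) := by
        refine Finset.sum_nbij' (fun p => (p.2, p.1 - p.2)) (fun p => ⟨p.1 + p.2, p.1⟩)
          ?_ ?_ ?_ ?_ ?_
        · intro a ha
          simp only [Finset.mem_sigma, Finset.mem_range] at ha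
          simp only [Finset.mem_filter, Finset.mem_product, Finset.mem_range]
          omega
        · intro a ha
          simp only [Finset.mem_filter, Finset.mem_product, Finset.mem_range] at ha
          simp only [Finset.mem_sigma, Finset.mem_range]
          omega
        · intro a ha
          simp only [Finset.mem_sigma, Finset.mem_range] at ha
          have : a.2 + (a.1 - a.2) = a.1 := by omega
          simp [this]
        · intro a ha
          simp only [Finset.mem_filter, Finset.mem_product, Finset.mem_range] at ha
          simp [Nat.add_sub_cancel_left]
        · intro a _; rfl
    _ = ∑ p ∈ Finset.range (2 * N) ×ˢ Finset.range (2 * N),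
          (qcoef p.1 * qcoef p.2) • (u ^ p.1 * v ^ p.2) := by
        refine Finset.sum_subset (Finset.filter_subset _ _) fun p hp hnp => ?_
        simp only [Finset.mem_filter, hp, true_and] at hnp
        rcases le_or_gt N p.1 with h1 | h1
        · rw [pow_eq_zero_of_le h1 hu, zero_mul, smul_zero]
        · rw [pow_eq_zero_of_le (by omega) hv, mul_zero, smul_zero]
    _ = ∑ i ∈ Finset.range (2 * N), ∑ j ∈ Finset.range (2 * N),
          (qcoef i • u ^ i) * (qcoef j • v ^ j) := by
        rw [Finset.sum_product]
        exact Finset.sum_congr rfl fun i _ => Finset.sum_congr rfl fun j _ =>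
          (smul_mul_smul_comm _ _ _ _).symm

lemma qexp_comm {u v : A} (h : u * v = v * u) {N : ℕ} (hu : u ^ N = 0) (hv : v ^ N = 0) :
    qexp u * qexp v = qexp v * qexp u := by
  rw [qexp_eq_qexpN hu, qexp_eq_qexpN hv]
  unfold qexpN
  rw [Finset.sum_mul_sum, Finset.sum_mul_sum, Finset.sum_comm]
  refine Finset.sum_congr rfl fun i _ => Finset.sum_congr rfl fun j _ => ?_
  rw [smul_mul_smul_comm, smul_mul_smul_comm, mul_comm (qcoef j) (qcoef i),
    (Commute.pow_pow (h : Commute u v) j i).eq]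

lemma conj_qexp {u v : A} (h : v * u = qq • (u * v)) {N : ℕ} (hu : u ^ N = 0) :
    v * qexp u = qexp u * (v + u * v) := by
  rw [qexp_eq_qexpN hu]
  unfold qexpN
  rw [Finset.mul_sum, Finset.sum_mul]
  have lhs_eq : ∀ n, v * (qcoef n • u ^ n) = (qq ^ n * qcoef n) • (u ^ n * v) := by
    intro n
    rw [mul_smul_comm, comm_pow_left h, smul_smul, mul_comm (qcoef n)]
  have rhs_eq : ∀ n, (qcoef n • u ^ n) * (v + u * v)
      = qcoef n • (u ^ n * v) + qcoef n • (u ^ (n + 1) * v) := by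
    intro n
    rw [mul_add, smul_mul_assoc, smul_mul_assoc, ← mul_assoc, ← pow_succ]
  simp only [lhs_eq, rhs_eq]
  rw [Finset.sum_add_distrib]
  cases N with
  | zero => simp
  | succ M =>
    rw [Finset.sum_range_succ' (fun n => (qq ^ n * qcoef n) • (u ^ n * v)) M,
      Finset.sum_range_succ' (fun n => qcoef n • (u ^ n * v)) M,
      Finset.sum_range_succ (fun n => qcoef n • (u ^ (n + 1) * v)) M]
    rw [pow_eq_zero_of_le (le_refl (M + 1)) hu, zero_mul, smul_zero, add_zero]
    simp only [pow_zero, one_mul, qcoef_zero']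
    rw [add_right_comm, ← Finset.sum_add_distrib]
    refine congrArg (· + (1 : RatFunc ℚ) • v) (Finset.sum_congr rfl fun n _ => ?_)
    rw [qcoef_q_pow_succ, add_smul]

lemma mul_pow_eq_zero {u v : A} (h : v * u = qq • (u * v)) {N : ℕ} (hu : u ^ N = 0) :
    (u * v) ^ N = 0 := by
  suffices H : ∀ n, ∃ c : RatFunc ℚ, (u * v) ^ n = c • (u ^ n * v ^ n) by
    obtain ⟨c, hc⟩ := H N
    rw [hc, hu, zero_mul, smul_zero]
  intro n
  induction n with
  | zero => exact ⟨1, by simp⟩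
  | succ n ih =>
    obtain ⟨c, hc⟩ := ih
    refine ⟨c * qq ^ n, ?_⟩
    rw [pow_succ, hc, smul_mul_assoc, mul_assoc, ← mul_assoc (v ^ n), comm_pow_right h,
      smul_mul_assoc, mul_smul_comm, smul_smul, mul_assoc u (v ^ n) v, ← pow_succ v,
      ← mul_assoc (u ^ n) u (v ^ (n + 1)), ← pow_succ u]

lemma sub_rel {u v : A} (h : v * u = qq • (u * v)) : v * (u * v) = qq • ((u * v) * v) := by
  rw [← mul_assoc, h, smul_mul_assoc, mul_assoc]

lemma pentagon {u v : A} (h : v * u = qq • (u * v)) {N : ℕ} (hu : u ^ N = 0)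
    (hv : v ^ N = 0) : qexp v * qexp u = qexp u * (qexp (u * v) * qexp v) := by
  have hw := sub_rel h
  have huv : (u * v) ^ N = 0 := mul_pow_eq_zero h hu
  have hkey : ∀ m : ℕ, v ^ m * qexp u = qexp u * (v + u * v) ^ m := by
    intro m
    induction m with
    | zero => simp
    | succ m ih =>
      rw [pow_succ', mul_assoc, ih, ← mul_assoc, conj_qexp h hu, mul_assoc, ← pow_succ']
  have hv2 : v ^ (2 * N) = 0 := pow_eq_zero_of_le (by omega) hv
  have hwN : (v + u * v) ^ (2 * N) = 0 := by
    rw [add_comm]; exact add_pow_eq_zero hw huv hv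
  calc qexp v * qexp u = qexpN (2 * N) v * qexp u := by rw [qexp_eq_qexpN hv2]
  _ = ∑ m ∈ Finset.range (2 * N), qcoef m • (v ^ m * qexp u) := by
      unfold qexpN
      rw [Finset.sum_mul]
      exact Finset.sum_congr rfl fun m _ => smul_mul_assoc _ _ _
  _ = ∑ m ∈ Finset.range (2 * N), qcoef m • (qexp u * (v + u * v) ^ m) := by
      exact Finset.sum_congr rfl fun m _ => by rw [hkey m]
  _ = qexp u * qexpN (2 * N) (v + u * v) := by
      unfold qexpN
      rw [Finset.mul_sum]
      exact Finset.sum_congr rfl fun m _ => (mul_smul_comm _ _ _).symm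
  _ = qexp u * qexp (v + u * v) := by rw [qexp_eq_qexpN hwN]
  _ = qexp u * (qexp (u * v) * qexp v) := by
      rw [add_comm, qexp_add hw huv hv]

lemma smul_cancel {a b : A} (h : qq • a = qq • b) : a = b := by
  have hq : qq ≠ 0 := RatFunc.X_ne_zero
  calc a = (qq⁻¹ * qq) • a := by rw [inv_mul_cancel₀ hq, one_smul]
  _ = qq⁻¹ • (qq • a) := (mul_smul _ _ _)
  _ = qq⁻¹ • (qq • b) := by rw [h]
  _ = (qq⁻¹ * qq) • b := (mul_smul _ _ _).symm
  _ = b := by rw [inv_mul_cancel₀ hq, one_smul]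

end Alg

/-- The cyclic `4 ∼ 4` quantum dilogarithm identity: for pairwise `q`-commuting
(nilpotent) `X`, `Y`, `Z` with `YX = qXY`, `XZ = qZX`, `ZY = qYZ`,
`E(X)E(XY)E(Z)E(Y) = E(Z)E(ZX)E(Y)E(X) = E(Y)E(YZ)E(X)E(Z)`. -/
theorem qexp_cyclic_four_four {A : Type*} [Ring A] [Algebra (RatFunc ℚ) A]
    [TopologicalSpace A] [T2Space A] (X Y Z : A)
    (hYX : Y * X = (RatFunc.X : RatFunc ℚ) • (X * Y))
    (hXZ : X * Z = (RatFunc.X : RatFunc ℚ) • (Z * X))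
    (hZY : Z * Y = (RatFunc.X : RatFunc ℚ) • (Y * Z))
    (hX : IsNilpotent X) (hY : IsNilpotent Y) (hZ : IsNilpotent Z) :
    qexp X * qexp (X * Y) * qexp Z * qexp Y = qexp Z * qexp (Z * X) * qexp Y * qexp X ∧
    qexp Z * qexp (Z * X) * qexp Y * qexp X = qexp Y * qexp (Y * Z) * qexp X * qexp Z := by
  obtain ⟨a, ha⟩ := hX
  obtain ⟨b, hb⟩ := hY
  obtain ⟨c, hc⟩ := hZ
  set N := max a (max b c) with hN
  have hXN : X ^ N = 0 := pow_eq_zero_of_le (le_max_left _ _) ha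
  have hYN : Y ^ N = 0 := pow_eq_zero_of_le (le_trans (le_max_left _ _) (le_max_right a _)) hb
  have hZN : Z ^ N = 0 := pow_eq_zero_of_le (le_trans (le_max_right _ _) (le_max_right a _)) hc
  have hXYN : (X * Y) ^ N = 0 := mul_pow_eq_zero hYX hXN
  have hZXN : (Z * X) ^ N = 0 := mul_pow_eq_zero hXZ hZN
  have hYZN : (Y * Z) ^ N = 0 := mul_pow_eq_zero hZY hYN
  have cXYZ : (X * Y) * Z = Z * (X * Y) := by
    apply smul_cancel (A := A)
    have h1 : (RatFunc.X : RatFunc ℚ) • ((X * Y) * Z) = X * (Z * Y) := by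
      rw [mul_assoc, ← mul_smul_comm, ← hZY]
    rw [h1, ← mul_assoc, hXZ, smul_mul_assoc, mul_assoc]
  have cZXY : (Z * X) * Y = Y * (Z * X) := by
    apply smul_cancel (A := A)
    have h1 : (RatFunc.X : RatFunc ℚ) • ((Z * X) * Y) = Z * (Y * X) := by
      rw [mul_assoc, ← mul_smul_comm, ← hYX]
    rw [h1, ← mul_assoc, hZY, smul_mul_assoc, mul_assoc]
  have P1 : qexp Y * qexp X = qexp X * (qexp (X * Y) * qexp Y) := pentagon hYX hXN hYN
  have P2 : qexp X * qexp Z = qexp Z * (qexp (Z * X) * qexp X) := pentagon hXZ hZN hXN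
  have P3 : qexp Z * qexp Y = qexp Y * (qexp (Y * Z) * qexp Z) := pentagon hZY hYN hZN
  have S1 : qexp (X * Y) * qexp Z = qexp Z * qexp (X * Y) := qexp_comm cXYZ hXYN hZN
  have S2 : qexp (Z * X) * qexp Y = qexp Y * qexp (Z * X) := qexp_comm cZXY hZXN hYN
  constructor
  · calc qexp X * qexp (X * Y) * qexp Z * qexp Y
        = qexp X * ((qexp (X * Y) * qexp Z) * qexp Y) := by
          simp only [mul_assoc]
    _ = qexp X * (qexp Z * (qexp (X * Y) * qexp Y)) := by rw [S1, mul_assoc]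
    _ = (qexp X * qexp Z) * (qexp (X * Y) * qexp Y) := by rw [mul_assoc]
    _ = qexp Z * (qexp (Z * X) * qexp X) * (qexp (X * Y) * qexp Y) := by rw [P2]
    _ = qexp Z * qexp (Z * X) * (qexp X * (qexp (X * Y) * qexp Y)) := by
          simp only [mul_assoc]
    _ = qexp Z * qexp (Z * X) * (qexp Y * qexp X) := by rw [← P1]
    _ = qexp Z * qexp (Z * X) * qexp Y * qexp X := by simp only [mul_assoc]
  · calc qexp Z * qexp (Z * X) * qexp Y * qexp X
        = qexp Z * ((qexp (Z * X) * qexp Y) * qexp X) := by simp only [mul_assoc]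
    _ = qexp Z * (qexp Y * (qexp (Z * X) * qexp X)) := by rw [S2, mul_assoc]
    _ = (qexp Z * qexp Y) * (qexp (Z * X) * qexp X) := by rw [mul_assoc]
    _ = qexp Y * (qexp (Y * Z) * qexp Z) * (qexp (Z * X) * qexp X) := by rw [P3]
    _ = qexp Y * qexp (Y * Z) * (qexp Z * (qexp (Z * X) * qexp X)) := by
          simp only [mul_assoc]
    _ = qexp Y * qexp (Y * Z) * (qexp X * qexp Z) := by rw [← P2]
    _ = qexp Y * qexp (Y * Z) * qexp X * qexp Z := by simp only [mul_assoc]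
end

section
/- If α and α' are two integer vectors in the kernel of the incidence matrix B of Q_N and α_{1j} = α'_{1j} for j = 2, ..., χ(N)+1 (where χ(N) = N/2 for even N and (N−1)/2 for odd N), then α = α'. That is, an element of ker B is uniquely determined by its values on the first χ(N) vertices of the top boundary row. -/
/-- Entry `B_{v,w}` of the skew-symmetric incidence matrix of the triangular quiver
`Q_N`: edges go `(i,j)→(i,j+1)`, `(i,j)→(i+1,j)` and `(i+1,j+1)→(i,j)`. -/
def Bfun (v w : ℕ × ℕ) : ℤ :=
  if (w = (v.1, v.2 + 1) ∨ w = (v.1 + 1, v.2) ∨ v = (w.1 + 1, w.2 + 1)) then 1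
  else if (v = (w.1, w.2 + 1) ∨ v = (w.1 + 1, w.2) ∨ w = (v.1 + 1, v.2 + 1)) then -1
  else 0

/-- The vertex set of the quiver `Q_N`: pairs `(i,j)` with `1 ≤ i < j ≤ N`. -/
def vertexSet (N : ℕ) : Finset (ℕ × ℕ) :=
  (Finset.Icc 1 N ×ˢ Finset.Icc 1 N).filter fun p => p.1 < p.2

/-- `χ(N) = N/2` for even `N` and `(N-1)/2` for odd `N`. -/
def chiN (N : ℕ) : ℕ := if N % 2 = 0 then N / 2 else (N - 1) / 2

lemma mem_vertexSet {N a b : ℕ} :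
    (a, b) ∈ vertexSet N ↔ 1 ≤ a ∧ a < b ∧ b ≤ N := by
  unfold vertexSet
  simp only [Finset.mem_filter, Finset.mem_product, Finset.mem_Icc]
  omega

/-- Extension of `β` by zero outside the vertex set. -/
def Tz (N : ℕ) (β : ℕ × ℕ → ℤ) (p : ℕ × ℕ) : ℤ :=
  if p ∈ vertexSet N then β p else 0

lemma Tz_zero {N : ℕ} {β : ℕ × ℕ → ℤ} {p : ℕ × ℕ} (h : p ∉ vertexSet N) :
    Tz N β p = 0 := if_neg h

/-- the top-row values -/
def gf (N : ℕ) (β : ℕ × ℕ → ℤ) (k : ℕ) : ℤ := Tz N β (1, k)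

/-- partial sums of top-row values -/
def Gs (N : ℕ) (β : ℕ × ℕ → ℤ) (n : ℕ) : ℤ := ∑ k ∈ Finset.range n, gf N β k

lemma Gs_succ (N : ℕ) (β : ℕ × ℕ → ℤ) (n : ℕ) :
    Gs N β (n + 1) = Gs N β n + gf N β n :=
  Finset.sum_range_succ _ _

/-- The kernel relation at vertex `(a+1, a+c+2)`, in extended-by-zero form. -/
lemma sum_eq (N : ℕ) (β : ℕ × ℕ → ℤ) (a c : ℕ) :
    ∑ w ∈ vertexSet N, Bfun (a + 1, a + c + 2) w * β w =
      Tz N β (a + 1, a + c + 3) + Tz N β (a + 2, a + c + 2) + Tz N β (a, a + c + 1)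
      - Tz N β (a + 1, a + c + 1) - Tz N β (a, a + c + 2) - Tz N β (a + 2, a + c + 3) := by
  have key : ∀ w ∈ vertexSet N, Bfun (a + 1, a + c + 2) w * β w =
      (if w = (a + 1, a + c + 3) then β w else 0)
      + (if w = (a + 2, a + c + 2) then β w else 0)
      + (if w = (a, a + c + 1) then β w else 0)
      - (if w = (a + 1, a + c + 1) then β w else 0)
      - (if w = (a, a + c + 2) then β w else 0)
      - (if w = (a + 2, a + c + 3) then β w else 0) := by
    rintro ⟨x, y⟩ -
    have hB : Bfun (a + 1, a + c + 2) (x, y) =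
        (if (x, y) = (a + 1, a + c + 3) then (1 : ℤ) else 0)
        + (if (x, y) = (a + 2, a + c + 2) then 1 else 0)
        + (if (x, y) = (a, a + c + 1) then 1 else 0)
        - (if (x, y) = (a + 1, a + c + 1) then 1 else 0)
        - (if (x, y) = (a, a + c + 2) then 1 else 0)
        - (if (x, y) = (a + 2, a + c + 3) then 1 else 0) := by
      simp only [Bfun, Prod.mk.injEq]
      split_ifs <;> omega
    rw [hB]
    simp only [add_mul, sub_mul, ite_mul, one_mul, zero_mul]
  rw [Finset.sum_congr rfl key]
  simp only [Finset.sum_add_distrib, Finset.sum_sub_distrib, Finset.sum_ite_eq']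
  rfl

/-- An element of `ker B` is uniquely determined by its values on the vertices
`(1,j)`, `j = 2, …, χ(N)+1`, of the top boundary row of `Q_N`. -/
theorem ker_B_determined_by_boundary (N : ℕ) (hN : 2 ≤ N) (α α' : ℕ × ℕ → ℤ)
    (hker : ∀ v ∈ vertexSet N, ∑ w ∈ vertexSet N, Bfun v w * α w = 0)
    (hker' : ∀ v ∈ vertexSet N, ∑ w ∈ vertexSet N, Bfun v w * α' w = 0)
    (hagree : ∀ j : ℕ, 2 ≤ j → j ≤ chiN N + 1 → α (1, j) = α' (1, j)) :
    ∀ v ∈ vertexSet N, α v = α' v := by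
  set β : ℕ × ℕ → ℤ := fun p => α p - α' p with hβ
  have hkerβ : ∀ v ∈ vertexSet N, ∑ w ∈ vertexSet N, Bfun v w * β w = 0 := by
    intro v hv
    have h1 := hker v hv
    have h2 := hker' v hv
    have h3 : ∑ w ∈ vertexSet N, Bfun v w * β w
        = (∑ w ∈ vertexSet N, Bfun v w * α w) - ∑ w ∈ vertexSet N, Bfun v w * α' w := by
      rw [← Finset.sum_sub_distrib]
      refine Finset.sum_congr rfl fun w _ => ?_
      simp only [hβ]
      ring
    rw [h3, h1, h2, sub_zero]
  have hrel : ∀ a c, a + c + 2 ≤ N →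
      Tz N β (a + 1, a + c + 3) + Tz N β (a + 2, a + c + 2) + Tz N β (a, a + c + 1)
      - Tz N β (a + 1, a + c + 1) - Tz N β (a, a + c + 2) - Tz N β (a + 2, a + c + 3)
      = 0 := by
    intro a c h
    rw [← sum_eq]
    exact hkerβ _ (by rw [mem_vertexSet]; omega)
  -- main formula
  have main : ∀ s i j, i + j ≤ s → 1 ≤ i → i < j → j ≤ N →
      Tz N β (i, j) = Gs N β (j + 1) - Gs N β (j - i + 1) - Gs N β (i + 1) + Gs N β 2 := by
    intro s
    induction s with
    | zero => intro i j h h1 h2 h3; omega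
    | succ s ihs =>
      intro i j hs h1 h2 h3
      rcases Nat.lt_or_ge i 2 with hi2 | hi2
      · -- i = 1
        obtain rfl : i = 1 := by omega
        rw [show j - 1 + 1 = j by omega, show (1 : ℕ) + 1 = 2 from rfl]
        have hT : Tz N β (1, j) = gf N β j := rfl
        rw [hT, Gs_succ]
        ring
      · rcases Nat.lt_or_ge j (i + 2) with hj2 | hj2
        · -- j = i + 1
          obtain ⟨a, rfl⟩ : ∃ a, i = a + 2 := ⟨i - 2, by omega⟩
          obtain rfl : j = a + 3 := by omega
          have hR := hrel a 0 (by omega)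
          rw [show a + 0 + 3 = a + 3 by omega, show a + 0 + 2 = a + 2 by omega,
            show a + 0 + 1 = a + 1 by omega] at hR
          have z1 : Tz N β (a + 2, a + 2) = 0 := Tz_zero (by rw [mem_vertexSet]; omega)
          have z2 : Tz N β (a + 1, a + 1) = 0 := Tz_zero (by rw [mem_vertexSet]; omega)
          have h4 : Tz N β (a + 1, a + 3)
              = Gs N β (a + 4) - Gs N β 3 - Gs N β (a + 2) + Gs N β 2 := by
            have h := ihs (a + 1) (a + 3) (by omega) (by omega) (by omega) (by omega)
            rw [show a + 3 - (a + 1) + 1 = 3 by omega, show a + 3 + 1 = a + 4 by omega,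
              show a + 1 + 1 = a + 2 by omega] at h
            exact h
          rw [show a + 3 - (a + 2) + 1 = 2 by omega, show a + 3 + 1 = a + 4 by omega,
            show a + 2 + 1 = a + 3 by omega]
          rcases Nat.eq_zero_or_pos a with rfl | ha
          · simp only [zero_add] at hR h4 z1 z2 ⊢
            have z3 : Tz N β (0, 1) = 0 := Tz_zero (by rw [mem_vertexSet]; omega)
            have z4 : Tz N β (0, 2) = 0 := Tz_zero (by rw [mem_vertexSet]; omega)
            linarith [hR, h4, z1, z2, z3, z4]
          · have h5 : Tz N β (a, a + 1)
                = Gs N β (a + 2) - Gs N β 2 - Gs N β (a + 1) + Gs N β 2 := by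
              have h := ihs a (a + 1) (by omega) (by omega) (by omega) (by omega)
              rw [show a + 1 - a + 1 = 2 by omega, show a + 1 + 1 = a + 2 by omega] at h
              exact h
            have h6 : Tz N β (a, a + 2)
                = Gs N β (a + 3) - Gs N β 3 - Gs N β (a + 1) + Gs N β 2 := by
              have h := ihs a (a + 2) (by omega) (by omega) (by omega) (by omega)
              rw [show a + 2 - a + 1 = 3 by omega, show a + 2 + 1 = a + 3 by omega] at h
              exact h
            linarith [hR, h4, h5, h6, z1, z2]
        · -- j ≥ i + 2
          obtain ⟨a, rfl⟩ : ∃ a, i = a + 2 := ⟨i - 2, by omega⟩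
          obtain ⟨m, rfl⟩ : ∃ m, j = a + m + 4 := ⟨j - (a + 4), by omega⟩
          have hR := hrel a (m + 1) (by omega)
          rw [show a + (m + 1) + 3 = a + m + 4 by omega,
            show a + (m + 1) + 2 = a + m + 3 by omega,
            show a + (m + 1) + 1 = a + m + 2 by omega] at hR
          have k1 : Tz N β (a + 1, a + m + 4)
              = Gs N β (a + m + 5) - Gs N β (m + 4) - Gs N β (a + 2) + Gs N β 2 := by
            have h := ihs (a + 1) (a + m + 4) (by omega) (by omega) (by omega) (by omega)
            rw [show a + m + 4 - (a + 1) + 1 = m + 4 by omega,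
              show a + m + 4 + 1 = a + m + 5 by omega,
              show a + 1 + 1 = a + 2 by omega] at h
            exact h
          have k2 : Tz N β (a + 2, a + m + 3)
              = Gs N β (a + m + 4) - Gs N β (m + 2) - Gs N β (a + 3) + Gs N β 2 := by
            have h := ihs (a + 2) (a + m + 3) (by omega) (by omega) (by omega) (by omega)
            rw [show a + m + 3 - (a + 2) + 1 = m + 2 by omega,
              show a + m + 3 + 1 = a + m + 4 by omega,
              show a + 2 + 1 = a + 3 by omega] at h
            exact h
          have k4 : Tz N β (a + 1, a + m + 2)
              = Gs N β (a + m + 3) - Gs N β (m + 2) - Gs N β (a + 2) + Gs N β 2 := by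
            have h := ihs (a + 1) (a + m + 2) (by omega) (by omega) (by omega) (by omega)
            rw [show a + m + 2 - (a + 1) + 1 = m + 2 by omega,
              show a + m + 2 + 1 = a + m + 3 by omega,
              show a + 1 + 1 = a + 2 by omega] at h
            exact h
          rw [show a + m + 4 - (a + 2) + 1 = m + 3 by omega,
            show a + m + 4 + 1 = a + m + 5 by omega,
            show a + 2 + 1 = a + 3 by omega]
          rcases Nat.eq_zero_or_pos a with rfl | ha
          · simp only [zero_add] at hR k1 k2 k4 ⊢
            have z3 : Tz N β (0, m + 2) = 0 := Tz_zero (by rw [mem_vertexSet]; omega)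
            have z5 : Tz N β (0, m + 3) = 0 := Tz_zero (by rw [mem_vertexSet]; omega)
            linarith [hR, k1, k2, k4, z3, z5]
          · have k3 : Tz N β (a, a + m + 2)
                = Gs N β (a + m + 3) - Gs N β (m + 3) - Gs N β (a + 1) + Gs N β 2 := by
              have h := ihs a (a + m + 2) (by omega) (by omega) (by omega) (by omega)
              rw [show a + m + 2 - a + 1 = m + 3 by omega,
                show a + m + 2 + 1 = a + m + 3 by omega] at h
              exact h
            have k5 : Tz N β (a, a + m + 3)
                = Gs N β (a + m + 4) - Gs N β (m + 4) - Gs N β (a + 1) + Gs N β 2 := by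
              have h := ihs a (a + m + 3) (by omega) (by omega) (by omega) (by omega)
              rw [show a + m + 3 - a + 1 = m + 4 by omega,
                show a + m + 3 + 1 = a + m + 4 by omega] at h
              exact h
            linarith [hR, k1, k2, k3, k4, k5]
  -- the boundary symmetry facts
  have fact1 : ∀ c', N = c' + 3 → gf N β (c' + 3) = gf N β 2 := by
    intro c' hN'
    have hR := hrel 0 (c' + 1) (by omega)
    rw [show 0 + (c' + 1) + 3 = c' + 4 by omega, show 0 + (c' + 1) + 2 = c' + 3 by omega,
      show 0 + (c' + 1) + 1 = c' + 2 by omega, show (0 : ℕ) + 1 = 1 by omega,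
      show (0 : ℕ) + 2 = 2 by omega] at hR
    have z1 : Tz N β (1, c' + 4) = 0 := Tz_zero (by rw [mem_vertexSet]; omega)
    have z2 : Tz N β (2, c' + 4) = 0 := Tz_zero (by rw [mem_vertexSet]; omega)
    have z3 : Tz N β (0, c' + 2) = 0 := Tz_zero (by rw [mem_vertexSet]; omega)
    have z4 : Tz N β (0, c' + 3) = 0 := Tz_zero (by rw [mem_vertexSet]; omega)
    have hm1 : Tz N β (2, c' + 3)
        = Gs N β (c' + 4) - Gs N β (c' + 2) - Gs N β 3 + Gs N β 2 := by
      have h := main (2 + (c' + 3)) 2 (c' + 3) (by omega) (by omega) (by omega) (by omega)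
      rw [show c' + 3 - 2 + 1 = c' + 2 by omega, show c' + 3 + 1 = c' + 4 by omega,
        show (2 : ℕ) + 1 = 3 by norm_num] at h
      exact h
    have hm2 : Tz N β (1, c' + 2)
        = Gs N β (c' + 3) - Gs N β (c' + 2) - Gs N β 2 + Gs N β 2 := by
      have h := main (1 + (c' + 2)) 1 (c' + 2) (by omega) (by omega) (by omega) (by omega)
      rw [show c' + 2 - 1 + 1 = c' + 2 by omega, show c' + 2 + 1 = c' + 3 by omega,
        show (1 : ℕ) + 1 = 2 by norm_num] at h
      exact h
    have gs1 : Gs N β (c' + 4) = Gs N β (c' + 3) + gf N β (c' + 3) := Gs_succ N β (c' + 3)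
    have gs2 : Gs N β 3 = Gs N β 2 + gf N β 2 := Gs_succ N β 2
    linarith [hR, z1, z2, z3, z4, hm1, hm2, gs1, gs2]
  have fact2 : ∀ a c, N = a + c + 4 → gf N β (a + 3) = gf N β (c + 3) := by
    intro a c hN'
    have hR := hrel (a + 1) (c + 1) (by omega)
    rw [show a + 1 + (c + 1) + 3 = a + c + 5 by omega,
      show a + 1 + (c + 1) + 2 = a + c + 4 by omega,
      show a + 1 + (c + 1) + 1 = a + c + 3 by omega,
      show a + 1 + 1 = a + 2 by omega, show a + 1 + 2 = a + 3 by omega] at hR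
    have z1 : Tz N β (a + 2, a + c + 5) = 0 := Tz_zero (by rw [mem_vertexSet]; omega)
    have z2 : Tz N β (a + 3, a + c + 5) = 0 := Tz_zero (by rw [mem_vertexSet]; omega)
    have hm1 : Tz N β (a + 3, a + c + 4)
        = Gs N β (a + c + 5) - Gs N β (c + 2) - Gs N β (a + 4) + Gs N β 2 := by
      have h := main ((a + 3) + (a + c + 4)) (a + 3) (a + c + 4)
        (by omega) (by omega) (by omega) (by omega)
      rw [show a + c + 4 - (a + 3) + 1 = c + 2 by omega,
        show a + c + 4 + 1 = a + c + 5 by omega, show a + 3 + 1 = a + 4 by omega] at h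
      exact h
    have hm2 : Tz N β (a + 1, a + c + 3)
        = Gs N β (a + c + 4) - Gs N β (c + 3) - Gs N β (a + 2) + Gs N β 2 := by
      have h := main ((a + 1) + (a + c + 3)) (a + 1) (a + c + 3)
        (by omega) (by omega) (by omega) (by omega)
      rw [show a + c + 3 - (a + 1) + 1 = c + 3 by omega,
        show a + c + 3 + 1 = a + c + 4 by omega, show a + 1 + 1 = a + 2 by omega] at h
      exact h
    have hm3 : Tz N β (a + 2, a + c + 3)
        = Gs N β (a + c + 4) - Gs N β (c + 2) - Gs N β (a + 3) + Gs N β 2 := by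
      have h := main ((a + 2) + (a + c + 3)) (a + 2) (a + c + 3)
        (by omega) (by omega) (by omega) (by omega)
      rw [show a + c + 3 - (a + 2) + 1 = c + 2 by omega,
        show a + c + 3 + 1 = a + c + 4 by omega, show a + 2 + 1 = a + 3 by omega] at h
      exact h
    have hm4 : Tz N β (a + 1, a + c + 4)
        = Gs N β (a + c + 5) - Gs N β (c + 4) - Gs N β (a + 2) + Gs N β 2 := by
      have h := main ((a + 1) + (a + c + 4)) (a + 1) (a + c + 4)
        (by omega) (by omega) (by omega) (by omega)
      rw [show a + c + 4 - (a + 1) + 1 = c + 4 by omega,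
        show a + c + 4 + 1 = a + c + 5 by omega, show a + 1 + 1 = a + 2 by omega] at h
      exact h
    have gs1 : Gs N β (c + 4) = Gs N β (c + 3) + gf N β (c + 3) := Gs_succ N β (c + 3)
    have gs2 : Gs N β (a + 4) = Gs N β (a + 3) + gf N β (a + 3) := Gs_succ N β (a + 3)
    linarith [hR, z1, z2, hm1, hm2, hm3, hm4, gs1, gs2]
  -- top-row values vanish
  have hchi : 2 * chiN N + 1 ≥ N ∧ 1 ≤ chiN N ∧ chiN N + 1 ≤ N := by
    unfold chiN; split <;> omega
  have hsmall : ∀ k, 2 ≤ k → k ≤ chiN N + 1 → gf N β k = 0 := by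
    intro k h2 h3
    have hm : (1, k) ∈ vertexSet N := by rw [mem_vertexSet]; omega
    have he : gf N β k = α (1, k) - α' (1, k) := by
      unfold gf Tz
      rw [if_pos hm, hβ]
    rw [he, hagree k h2 h3, sub_self]
  have gzero : ∀ k, 2 ≤ k → k ≤ N → gf N β k = 0 := by
    intro k h2 hN'
    by_cases hk : k ≤ chiN N + 1
    · exact hsmall k h2 hk
    · have h3 : 3 ≤ N := by omega
      by_cases hkN : k = N
      · have h := fact1 (N - 3) (by omega)
        rw [show N - 3 + 3 = N by omega] at h
        rw [hkN, h]
        exact hsmall 2 le_rfl (by omega)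
      · have hf := fact2 (k - 3) (N + 2 - k - 3) (by omega)
        rw [show k - 3 + 3 = k by omega, show N + 2 - k - 3 + 3 = N + 2 - k by omega] at hf
        rw [hf]
        exact hsmall (N + 2 - k) (by omega) (by omega)
  -- partial sums are constant
  have GsConst : ∀ n, 2 ≤ n → n ≤ N + 1 → Gs N β n = Gs N β 2 := by
    have aux : ∀ d, 2 + d ≤ N + 1 → Gs N β (2 + d) = Gs N β 2 := by
      intro d
      induction d with
      | zero => intro _; rfl
      | succ d ihd =>
        intro h
        rw [show 2 + (d + 1) = (2 + d) + 1 from rfl, Gs_succ, ihd (by omega),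
          gzero (2 + d) (by omega) (by omega), add_zero]
    intro n h2 hn
    rw [show n = 2 + (n - 2) by omega]
    exact aux _ (by omega)
  -- conclusion
  rintro ⟨i, j⟩ hv
  have hv' := hv
  rw [mem_vertexSet] at hv'
  obtain ⟨h1, h2, h3⟩ := hv'
  have hm := main (i + j) i j le_rfl h1 h2 h3
  rw [GsConst (j + 1) (by omega) (by omega), GsConst (j - i + 1) (by omega) (by omega),
    GsConst (i + 1) (by omega) (by omega)] at hm
  have h0 : Tz N β (i, j) = 0 := by rw [hm]; ring
  unfold Tz at h0
  rw [if_pos hv, hβ] at h0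
  simp only at h0
  omega
end
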